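/- Let p be an odd prime, a ∈ F_p* a quadratic residue, and E: y^2 = x(x+a)^2 over F_p, whose group of non-singular points is cyclic of order p - 1 = 2^e m with m odd. Let t ∈ F_p, t ≠ 0, be such that t^2 + a is a quadratic non-residue mod p, and let P = (t^2, t(t^2 + a)). Then m·P is not the identity; consequently the order of P is even. -/

import Mathlib

lemma aux_sq {K : Type*} [Field K] (a x y t : K) (h2 : (2:K) ≠ 0) (hy : y ≠ 0)
    (hxa : x + a ≠ 0) (hE : y ^ 2 = x * (x + a) ^ 2)
    (hX : ((3 * x ^ 2 + 2 * (2 * a) * x + a ^ 2) / (2 * y)) ^ 2 - 2 * a - x - x = t ^ 2) :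
    ∃ s : K, s ^ 2 = t ^ 2 + a := by
  have hx0 : x ≠ 0 := by
    intro h; apply hy; rw [h] at hE; simpa using hE
  refine ⟨y / (x + a) - (x ^ 2 - a ^ 2) / (2 * y), ?_⟩
  rw [← hX]
  field_simp
  ring_nf
  linear_combination (4*y^2 + 4*x*(x+a)^2 + 4*(x+a)^2*(x+2*a)) * hE

theorem cipolla_singular_cubic (p : ℕ) [hp : Fact p.Prime] (hodd : p % 2 = 1)
    (a : ZMod p) (ha : a ≠ 0) (hQR : ∃ s : ZMod p, s ^ 2 = a)
    (W : WeierstrassCurve.Affine (ZMod p)) (hW : W = ⟨0, 2 * a, 0, a ^ 2, 0⟩)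
    (e m : ℕ) (hm : Odd m) (hem : p - 1 = 2 ^ e * m)
    (hcard : Nat.card W.Point = p - 1) (hcyc : IsAddCyclic W.Point)
    (t : ZMod p) (ht : t ≠ 0) (hnr : (t ^ 2 + a) ^ ((p - 1) / 2) = -1)
    (hP : W.Nonsingular (t ^ 2) (t * (t ^ 2 + a))) :
    m • (WeierstrassCurve.Affine.Point.some _ _ hP) ≠ 0 ∧
      2 ∣ addOrderOf (WeierstrassCurve.Affine.Point.some _ _ hP) := by
  have ha1 : W.a₁ = 0 := by rw [hW]
  have ha2 : W.a₂ = 2 * a := by rw [hW]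
  have ha3 : W.a₃ = 0 := by rw [hW]
  have ha4 : W.a₄ = a ^ 2 := by rw [hW]
  have ha6 : W.a₆ = 0 := by rw [hW]
  have hp2 : p ≠ 2 := by intro h; subst h; norm_num at hodd
  have hp3 : 2 < p := lt_of_le_of_ne hp.out.two_le (Ne.symm hp2)
  haveI : Fact (2 < p) := ⟨hp3⟩
  have h2 : (2 : ZMod p) ≠ 0 := by
    intro h
    have hd : p ∣ 2 := by
      have : ((2 : ℕ) : ZMod p) = 0 := by exact_mod_cast h
      exact (ZMod.natCast_eq_zero_iff 2 p).mp this
    have := Nat.le_of_dvd (by norm_num) hd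
    omega
  have key : m • (WeierstrassCurve.Affine.Point.some _ _ hP) ≠ 0 := by
    intro hm0
    have hndvd : addOrderOf (WeierstrassCurve.Affine.Point.some _ _ hP) ∣ m :=
      addOrderOf_dvd_of_nsmul_eq_zero hm0
    set n := addOrderOf (WeierstrassCurve.Affine.Point.some _ _ hP) with hn
    have hnodd : Odd n := by
      rcases Nat.even_or_odd n with he | ho
      · have h1 : 2 ∣ m := he.two_dvd.trans hndvd
        have h2 := Nat.odd_iff.mp hm
        omega
      · exact ho
    obtain ⟨Q, h2Q⟩ : ∃ Q, 2 • Q = WeierstrassCurve.Affine.Point.some _ _ hP := by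
      refine ⟨((n + 1) / 2) • (WeierstrassCurve.Affine.Point.some _ _ hP), ?_⟩
      rw [smul_smul, Nat.mul_div_cancel' hnodd.add_one.two_dvd,
        succ_nsmul, addOrderOf_nsmul_eq_zero, zero_add]
    cases Q with
    | zero =>
      rw [← WeierstrassCurve.Affine.Point.zero_def, two_nsmul, add_zero,
        WeierstrassCurve.Affine.Point.zero_def] at h2Q
      exact WeierstrassCurve.Affine.Point.some_ne_zero hP
        (h2Q.symm.trans WeierstrassCurve.Affine.Point.zero_def.symm)
    | some x₀ y₀ hQ =>
      rw [two_nsmul] at h2Q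
      have hEq : y₀ ^ 2 = x₀ * (x₀ + a) ^ 2 := by
        have h1 := hQ.1
        rw [WeierstrassCurve.Affine.equation_iff, ha1, ha2, ha3, ha4, ha6] at h1
        linear_combination h1
      have hxa : x₀ + a ≠ 0 := by
        intro hx
        have hy0 : y₀ = 0 := by
          have : y₀ ^ 2 = 0 := by rw [hEq, hx]; ring
          exact pow_eq_zero_iff (by norm_num) |>.mp this
        have hx0 : x₀ = -a := by linear_combination hx
        have hns := (WeierstrassCurve.Affine.nonsingular_iff' x₀ y₀).mp hQ
        rcases hns.2 with h | h
        · apply h; rw [ha1, ha2, ha4, hx0, hy0]; ring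
        · apply h; rw [ha1, ha3, hx0, hy0]; ring
      by_cases hy : y₀ = W.negY x₀ y₀
      · rw [WeierstrassCurve.Affine.Point.add_self_of_Y_eq hy] at h2Q
        exact WeierstrassCurve.Affine.Point.some_ne_zero hP h2Q.symm
      · have hy0 : y₀ ≠ 0 := by
          intro h0
          apply hy
          rw [WeierstrassCurve.Affine.negY, ha1, ha3, h0]
          ring
        rw [WeierstrassCurve.Affine.Point.add_self_of_Y_ne hy] at h2Q
        injection h2Q with hx hyy
        rw [WeierstrassCurve.Affine.slope_of_Y_ne rfl hy] at hx
        rw [WeierstrassCurve.Affine.addX, WeierstrassCurve.Affine.negY,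
          ha1, ha2, ha3, ha4] at hx
        have hden : y₀ - (-y₀ - 0 * x₀ - 0) = 2 * y₀ := by ring
        have hX : ((3 * x₀ ^ 2 + 2 * (2 * a) * x₀ + a ^ 2) / (2 * y₀)) ^ 2
            - 2 * a - x₀ - x₀ = t ^ 2 := by
          rw [← hx]; rw [← hden]; ring_nf
        obtain ⟨s, hs⟩ := aux_sq a x₀ y₀ t h2 hy0 hxa hEq hX
        have hs0 : s ≠ 0 := by
          intro h0
          rw [h0] at hs
          have hta : t ^ 2 + a = 0 := by linear_combination -hs
          rw [hta, zero_pow (by omega : (p - 1) / 2 ≠ 0)] at hnr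
          exact one_ne_zero (neg_eq_zero.mp hnr.symm)
        have hone : (t ^ 2 + a) ^ ((p - 1) / 2) = 1 := by
          rw [← hs, ← pow_mul, (by omega : 2 * ((p - 1) / 2) = p - 1),
            ZMod.pow_card_sub_one_eq_one hs0]
        exact ZMod.neg_one_ne_one (hone.symm.trans hnr).symm
  refine ⟨key, ?_⟩
  by_contra h2d
  have hodd_n : Odd (addOrderOf (WeierstrassCurve.Affine.Point.some _ _ hP)) :=
    Nat.odd_iff.mpr (by omega)
  have hdvd : addOrderOf (WeierstrassCurve.Affine.Point.some _ _ hP) ∣ p - 1 := by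
    rw [← hcard]
    exact addOrderOf_dvd_natCard _
  rw [hem] at hdvd
  have hnm : addOrderOf (WeierstrassCurve.Affine.Point.some _ _ hP) ∣ m :=
    (Nat.Coprime.pow_right e hodd_n.coprime_two_right).dvd_of_dvd_mul_left hdvd
  exact key (addOrderOf_dvd_iff_nsmul_eq_zero.mp hnm)
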